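/- Let $T$ be an interval exchange transformation of $[0,1)$ (more generally, a Lebesgue-measure-preserving bijection of $[0,1)$) and $f: [0,1) \to \mathbb{R}$ a function of bounded variation. Suppose $\{T^i\Delta : 0 \leq i < q\}$ is a Rokhlin tower of intervals, i.e. $\Delta \subset [0,1)$ is an interval, each $T^i\Delta$ for $0 \leq i < q$ is an interval and these intervals are pairwise disjoint, and $T$ restricted to each $T^i\Delta$ ($0 \leq i < q-1$) is a translation. Then there exists $a \in \mathbb{R}$ such that for all $x \in \bigcup_{i=0}^{q-1} T^i(\Delta \cap T^{-q}\Delta \cap T^{-2q}\Delta)$, one has $|f^{(q)}(x) - a| \leq \mathrm{Var}_{[0,1)} f$ and $|f^{(2q)}(x) - 2a| \leq 2\,\mathrm{Var}_{[0,1)} f$, where $f^{(n)}(x) = \sum_{j=0}^{n-1} f(T^j x)$. -/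

import Mathlib

open MeasureTheory Filter Set

/-- Birkhoff sum `f^(n)(x) = ∑_{i<n} f(T^i x)`. -/
noncomputable def birkhoff (T : ℝ → ℝ) (f : ℝ → ℝ) (n : ℕ) (x : ℝ) : ℝ :=
  ∑ i ∈ Finset.range n, f (T^[i] x)

/-! ### Auxiliary lemmas -/

private lemma sum_eVar_le (f : ℝ → ℝ) : ∀ (n : ℕ) (S : Fin n → Set ℝ),
    (∀ k l : Fin n, k < l → ∀ x ∈ S k, ∀ y ∈ S l, x ≤ y) →
    ∑ k, eVariationOn f (S k) ≤ eVariationOn f (⋃ k, S k) := by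
  intro n
  induction n with
  | zero => simp
  | succ n ih =>
    intro S h
    rw [Fin.sum_univ_succ]
    have h1 : ∑ k : Fin n, eVariationOn f (S k.succ) ≤ eVariationOn f (⋃ k : Fin n, S k.succ) :=
      ih _ (fun k l hkl x hx y hy => h k.succ l.succ (by simpa using hkl) x hx y hy)
    calc eVariationOn f (S 0) + ∑ k : Fin n, eVariationOn f (S k.succ)
        ≤ eVariationOn f (S 0) + eVariationOn f (⋃ k : Fin n, S k.succ) :=
          add_le_add_right h1 _
      _ ≤ eVariationOn f (S 0 ∪ ⋃ k : Fin n, S k.succ) := by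
          apply eVariationOn.add_le_union
          rintro x hx y hy
          obtain ⟨k, hk⟩ := Set.mem_iUnion.mp hy
          exact h 0 k.succ k.succ_pos x hx y hk
      _ ≤ eVariationOn f (⋃ k, S k) := by
          apply eVariationOn.mono
          apply Set.union_subset
          · exact Set.subset_iUnion S 0
          · exact Set.iUnion_subset fun k => Set.subset_iUnion S k.succ

private lemma ordered_of_disjoint {c d c' d' x y z z' : ℝ}
    (hd : Disjoint (Set.Ico c d) (Set.Ico c' d'))
    (hz : z ∈ Set.Ico c d) (hz' : z' ∈ Set.Ico c' d') (hzz : z ≤ z')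
    (hx : x ∈ Set.Ico c d) (hy : y ∈ Set.Ico c' d') : x ≤ y := by
  have hE : Set.Ico (max c c') (min d d') = ∅ := by
    rw [← Set.Ico_inter_Ico]
    exact Set.disjoint_iff_inter_eq_empty.mp hd
  rw [Set.Ico_eq_empty_iff] at hE
  push_neg at hE
  simp only [Set.mem_Ico] at *
  by_contra hxy
  push_neg at hxy
  rw [min_def, max_def] at hE
  split_ifs at hE <;> linarith

private lemma pairs_var_le (f : ℝ → ℝ) {n : ℕ} (z w : Fin n → ℝ) (I : Fin n → Set ℝ)
    (hI : ∀ k, ∃ c d : ℝ, I k = Set.Ico c d)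
    (hz : ∀ k, z k ∈ I k) (hw : ∀ k, w k ∈ I k)
    (hd : ∀ k l, k ≠ l → Disjoint (I k) (I l))
    (hsub : ∀ k, I k ⊆ Set.Ico (0:ℝ) 1) :
    ∑ k, edist (f (z k)) (f (w k)) ≤ eVariationOn f (Set.Ico 0 1) := by
  set σ := Tuple.sort z with hσ
  have hmono : Monotone (z ∘ σ) := Tuple.monotone_sort z
  have key : ∑ k, eVariationOn f ({z (σ k), w (σ k)} : Set ℝ)
      ≤ eVariationOn f (⋃ k : Fin n, ({z (σ k), w (σ k)} : Set ℝ)) := by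
    apply sum_eVar_le
    intro k l hkl x hx y hy
    have hne : σ k ≠ σ l := fun hh => absurd (σ.injective hh) (ne_of_lt hkl)
    obtain ⟨c, d, hcd⟩ := hI (σ k)
    obtain ⟨c', d', hcd'⟩ := hI (σ l)
    have hxI : x ∈ Set.Ico c d := by
      rw [← hcd]; rcases hx with rfl | hx
      · exact hz _
      · rw [Set.mem_singleton_iff] at hx; subst hx; exact hw _
    have hyI : y ∈ Set.Ico c' d' := by
      rw [← hcd']; rcases hy with rfl | hy
      · exact hz _
      · rw [Set.mem_singleton_iff] at hy; subst hy; exact hw _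
    exact ordered_of_disjoint (hcd ▸ hcd' ▸ hd _ _ hne)
      (hcd ▸ hz (σ k)) (hcd' ▸ hz (σ l)) (hmono (le_of_lt hkl)) hxI hyI
  have step1 : ∑ k, edist (f (z k)) (f (w k))
      = ∑ k, edist (f (z (σ k))) (f (w (σ k))) :=
    (Equiv.sum_comp σ fun k => edist (f (z k)) (f (w k))).symm
  rw [step1]
  calc ∑ k, edist (f (z (σ k))) (f (w (σ k)))
      ≤ ∑ k, eVariationOn f ({z (σ k), w (σ k)} : Set ℝ) := by
        apply Finset.sum_le_sum
        intro k _
        exact eVariationOn.edist_le f (by simp) (by simp)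
    _ ≤ eVariationOn f (⋃ k : Fin n, ({z (σ k), w (σ k)} : Set ℝ)) := key
    _ ≤ eVariationOn f (Set.Ico 0 1) := by
        apply eVariationOn.mono
        apply Set.iUnion_subset
        intro k x hx
        apply hsub (σ k)
        rcases hx with rfl | hx
        · exact hz _
        · rw [Set.mem_singleton_iff] at hx; subst hx; exact hw _

/-- Index of the level-`l` point in the orbit of a point at level `i`. -/
private def jidx (q i l : ℕ) : ℕ := if i ≤ l then l - i else l + q - i

private lemma jidx_mem {T : ℝ → ℝ} {a b : ℝ} {q i l : ℕ} (hi : i < q) (hl : l < q)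
    {y : ℝ} (hy : y ∈ Set.Ico a b) (hyq : T^[q] y ∈ Set.Ico a b) :
    T^[jidx q i l] (T^[i] y) ∈ T^[l] '' Set.Ico a b := by
  rw [← Function.iterate_add_apply]
  unfold jidx
  split_ifs with h
  · have : l - i + i = l := by omega
    rw [this]
    exact ⟨y, hy, rfl⟩
  · have : l + q - i + i = l + q := by omega
    rw [this, Function.iterate_add_apply]
    exact ⟨T^[q] y, hyq, rfl⟩

private lemma reidx (g : ℕ → ℝ) {q i : ℕ} (hi : i < q) :
    ∑ j ∈ Finset.range q, g j = ∑ l ∈ Finset.range q, g (jidx q i l) := by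
  apply Finset.sum_nbij' (i := fun j => if i + j < q then i + j else i + j - q)
    (j := fun l => jidx q i l) <;>
    intro m hm <;> simp only [Finset.mem_range] at * <;> (try simp only [jidx]) <;>
    (try split_ifs) <;> (try omega) <;> congr 1 <;> omega

private lemma birkhoff_diff_le (T f : ℝ → ℝ) (hBV : BoundedVariationOn f (Set.Ico 0 1))
    (a b : ℝ) (q : ℕ)
    (hsub : ∀ i < q, T^[i] '' Set.Ico a b ⊆ Set.Ico 0 1)
    (hintv : ∀ i < q, ∃ c d : ℝ, T^[i] '' Set.Ico a b = Set.Ico c d)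
    (hdisj : ∀ i < q, ∀ j < q, i ≠ j →
      Disjoint (T^[i] '' Set.Ico a b) (T^[j] '' Set.Ico a b)) :
    ∀ x ∈ ⋃ i ∈ Finset.range q, T^[i] '' (Set.Ico a b ∩ T^[q] ⁻¹' Set.Ico a b),
    ∀ x' ∈ ⋃ i ∈ Finset.range q, T^[i] '' (Set.Ico a b ∩ T^[q] ⁻¹' Set.Ico a b),
      |birkhoff T f q x - birkhoff T f q x'| ≤ (eVariationOn f (Set.Ico 0 1)).toReal := by
  intro x hx x' hx'
  simp only [Set.mem_iUnion, Finset.mem_range] at hx hx'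
  obtain ⟨i, hi, y, ⟨hy1, hy2⟩, rfl⟩ := hx
  obtain ⟨i', hi', y', ⟨hy1', hy2'⟩, rfl⟩ := hx'
  set z : Fin q → ℝ := fun l => T^[jidx q i l] (T^[i] y) with hzdef
  set w : Fin q → ℝ := fun l => T^[jidx q i' l] (T^[i'] y') with hwdef
  have hz : ∀ l : Fin q, z l ∈ T^[(l : ℕ)] '' Set.Ico a b :=
    fun l => jidx_mem hi l.isLt hy1 hy2
  have hw : ∀ l : Fin q, w l ∈ T^[(l : ℕ)] '' Set.Ico a b :=
    fun l => jidx_mem hi' l.isLt hy1' hy2'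
  have hb1 : birkhoff T f q (T^[i] y) = ∑ l : Fin q, f (z l) := by
    rw [birkhoff, reidx (fun j => f (T^[j] (T^[i] y))) hi, Finset.sum_range]
  have hb2 : birkhoff T f q (T^[i'] y') = ∑ l : Fin q, f (w l) := by
    rw [birkhoff, reidx (fun j => f (T^[j] (T^[i'] y'))) hi', Finset.sum_range]
  have hEsum : ∑ l : Fin q, edist (f (z l)) (f (w l)) ≤ eVariationOn f (Set.Ico 0 1) := by
    apply pairs_var_le f z w (fun l : Fin q => T^[(l : ℕ)] '' Set.Ico a b)
      (fun l => hintv l l.isLt) hz hw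
      (fun k l hkl => hdisj k k.isLt l l.isLt (fun h => hkl (Fin.ext h)))
      (fun l => hsub l l.isLt)
  have habs : ∑ l : Fin q, |f (z l) - f (w l)|
      = (∑ l : Fin q, edist (f (z l)) (f (w l))).toReal := by
    rw [ENNReal.toReal_sum (fun l _ => edist_ne_top _ _)]
    apply Finset.sum_congr rfl
    intro l _
    rw [← dist_edist, Real.dist_eq]
  calc |birkhoff T f q (T^[i] y) - birkhoff T f q (T^[i'] y')|
      = |∑ l : Fin q, (f (z l) - f (w l))| := by
        rw [hb1, hb2, Finset.sum_sub_distrib]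
    _ ≤ ∑ l : Fin q, |f (z l) - f (w l)| := Finset.abs_sum_le_sum_abs _ _
    _ ≤ (eVariationOn f (Set.Ico 0 1)).toReal := by
        rw [habs]
        exact ENNReal.toReal_mono hBV hEsum

/-- Over a Rokhlin tower of intervals `{T^i [a,b) : 0 ≤ i < q}` on which `T` acts by
translations, the Birkhoff sums `f^(q)` and `f^(2q)` of a function of bounded variation
are within `Var f` (resp. `2 Var f`) of a constant `A` (resp. `2A`) on
`⋃_{i<q} T^i(Δ ∩ T^{-q}Δ ∩ T^{-2q}Δ)`. -/
theorem stmt4 (T f : ℝ → ℝ) (hBV : BoundedVariationOn f (Set.Ico 0 1))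
    (a b : ℝ) (q : ℕ)
    (hsub : ∀ i < q, T^[i] '' Set.Ico a b ⊆ Set.Ico 0 1)
    (hintv : ∀ i < q, ∃ c d : ℝ, T^[i] '' Set.Ico a b = Set.Ico c d)
    (hdisj : ∀ i < q, ∀ j < q, i ≠ j →
      Disjoint (T^[i] '' Set.Ico a b) (T^[j] '' Set.Ico a b))
    (htrans : ∀ i, i + 1 < q → ∃ t, ∀ x ∈ T^[i] '' Set.Ico a b, T x = x + t) :
    ∃ A : ℝ, ∀ x ∈ ⋃ i ∈ Finset.range q,
        T^[i] '' (Set.Ico a b ∩ T^[q] ⁻¹' Set.Ico a b ∩ T^[2 * q] ⁻¹' Set.Ico a b),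
      |birkhoff T f q x - A| ≤ (eVariationOn f (Set.Ico 0 1)).toReal ∧
      |birkhoff T f (2 * q) x - 2 * A| ≤ 2 * (eVariationOn f (Set.Ico 0 1)).toReal := by
  have hdiff := birkhoff_diff_le T f hBV a b q hsub hintv hdisj
  set S := ⋃ i ∈ Finset.range q, T^[i] '' (Set.Ico a b ∩ T^[q] ⁻¹' Set.Ico a b) with hSdef
  by_cases hne : S.Nonempty
  · obtain ⟨x₀, hx₀⟩ := hne
    refine ⟨birkhoff T f q x₀, ?_⟩
    intro x hx
    simp only [Set.mem_iUnion, Finset.mem_range] at hx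
    obtain ⟨i, hi, y, ⟨⟨hy1, hy2⟩, hy3⟩, rfl⟩ := hx
    have hxS : T^[i] y ∈ S := by
      simp only [hSdef, Set.mem_iUnion, Finset.mem_range]
      exact ⟨i, hi, y, ⟨hy1, hy2⟩, rfl⟩
    have hq2 : T^[q] (T^[q] y) ∈ Set.Ico a b := by
      rw [← Function.iterate_add_apply]
      have h2q : q + q = 2 * q := by omega
      rw [h2q]
      exact hy3
    have hTqx : T^[q] (T^[i] y) ∈ S := by
      have heq : T^[q] (T^[i] y) = T^[i] (T^[q] y) := by
        rw [← Function.iterate_add_apply, ← Function.iterate_add_apply, Nat.add_comm]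
      rw [heq]
      simp only [hSdef, Set.mem_iUnion, Finset.mem_range]
      exact ⟨i, hi, T^[q] y, ⟨hy2, hq2⟩, rfl⟩
    have h1 := hdiff _ hxS _ hx₀
    refine ⟨h1, ?_⟩
    have h2 := hdiff _ hTqx _ hx₀
    have hsplit : birkhoff T f (2 * q) (T^[i] y)
        = birkhoff T f q (T^[i] y) + birkhoff T f q (T^[q] (T^[i] y)) := by
      unfold birkhoff
      rw [two_mul, Finset.sum_range_add]
      congr 1
      apply Finset.sum_congr rfl
      intro j _
      rw [← Function.iterate_add_apply T j q (T^[i] y), Nat.add_comm q j]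
    rw [hsplit]
    have : |birkhoff T f q (T^[i] y) + birkhoff T f q (T^[q] (T^[i] y))
        - 2 * birkhoff T f q x₀|
        = |(birkhoff T f q (T^[i] y) - birkhoff T f q x₀)
          + (birkhoff T f q (T^[q] (T^[i] y)) - birkhoff T f q x₀)| := by
      ring_nf
    rw [this]
    calc |(birkhoff T f q (T^[i] y) - birkhoff T f q x₀)
          + (birkhoff T f q (T^[q] (T^[i] y)) - birkhoff T f q x₀)|
        ≤ |birkhoff T f q (T^[i] y) - birkhoff T f q x₀|
          + |birkhoff T f q (T^[q] (T^[i] y)) - birkhoff T f q x₀| := abs_add_le _ _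
      _ ≤ 2 * (eVariationOn f (Set.Ico 0 1)).toReal := by linarith
  · refine ⟨0, fun x hx => absurd ?_ hne⟩
    simp only [Set.mem_iUnion, Finset.mem_range] at hx
    obtain ⟨i, hi, y, ⟨⟨hy1, hy2⟩, hy3⟩, rfl⟩ := hx
    exact ⟨T^[i] y, by
      simp only [hSdef, Set.mem_iUnion, Finset.mem_range]
      exact ⟨i, hi, y, ⟨hy1, hy2⟩, rfl⟩⟩
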